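/- Let X be a real Banach space that is Hahn-Banach smooth (every norm-one functional in X* has a unique norm-preserving extension to X*** under the canonical embedding). If x ∈ S(X) is a smooth point of X, then x, viewed in X** via the canonical embedding, is a smooth point of X**. -/

import Mathlib

open NormedSpace

/-- In a Hahn-Banach smooth Banach space, any smooth point of the unit sphere of `X` remains
a smooth point of `X**` under the canonical embedding. -/
theorem stmt_15 (X : Type*) [NormedAddCommGroup X] [NormedSpace ℝ X] [CompleteSpace X]
    (hHBs : ∀ x' : StrongDual ℝ X, ‖x'‖ = 1 →
      ∃! Λ : StrongDual ℝ (StrongDual ℝ (StrongDual ℝ X)), @norm _ (ContinuousLinearMap.hasOpNorm (E := StrongDual ℝ (StrongDual ℝ X)) (F := ℝ) (σ₁₂ := RingHom.id ℝ)) Λ = 1 ∧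
        ∀ x : X, Λ (inclusionInDoubleDual ℝ X x) = x' x)
    (x : X) (hx : ‖x‖ = 1)
    (hsmooth : ∃! x' : StrongDual ℝ X, ‖x'‖ = 1 ∧ x' x = 1) :
    ∃! Λ : StrongDual ℝ (StrongDual ℝ (StrongDual ℝ X)), @norm _ (ContinuousLinearMap.hasOpNorm (E := StrongDual ℝ (StrongDual ℝ X)) (F := ℝ) (σ₁₂ := RingHom.id ℝ)) Λ = 1 ∧ Λ (inclusionInDoubleDual ℝ X x) = 1 := by
  obtain ⟨x', ⟨hx'norm, hx'x⟩, hx'uniq⟩ := hsmooth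
  obtain ⟨Λ, ⟨hΛnorm, hΛext⟩, hΛuniq⟩ := hHBs x' hx'norm
  refine ⟨Λ, ⟨hΛnorm, by rw [hΛext, hx'x]⟩, ?_⟩
  rintro Λ' ⟨hΛ'norm, hΛ'x⟩
  set y' : StrongDual ℝ X := Λ'.comp (inclusionInDoubleDual ℝ X) with hy'
  have hy'le : ‖y'‖ ≤ 1 := by
    refine ContinuousLinearMap.opNorm_le_bound _ zero_le_one fun z => ?_
    calc ‖Λ' (inclusionInDoubleDual ℝ X z)‖ ≤ @norm _ (ContinuousLinearMap.hasOpNorm (E := StrongDual ℝ (StrongDual ℝ X)) (F := ℝ) (σ₁₂ := RingHom.id ℝ)) Λ' * ‖inclusionInDoubleDual ℝ X z‖ :=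
          ContinuousLinearMap.le_opNorm (E := StrongDual ℝ (StrongDual ℝ X)) (F := ℝ) (σ₁₂ := RingHom.id ℝ) Λ' _
      _ ≤ 1 * ‖z‖ := by
          rw [hΛ'norm]; exact mul_le_mul_of_nonneg_left (double_dual_bound ℝ X z) zero_le_one
      _ = 1 * ‖z‖ := rfl
  have hy'x : y' x = 1 := hΛ'x
  have hy'norm : ‖y'‖ = 1 := by
    refine le_antisymm hy'le ?_
    calc (1 : ℝ) = ‖y' x‖ := by rw [hy'x]; simp
      _ ≤ ‖y'‖ * ‖x‖ := y'.le_opNorm x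
      _ = ‖y'‖ := by rw [hx, mul_one]
  have := hx'uniq y' ⟨hy'norm, hy'x⟩
  exact hΛuniq Λ' ⟨hΛ'norm, fun z => by rw [← this]; rfl⟩
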